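/- arXiv:1110.3585 — 2 statements merged into one kernel-verified Lean document; each statement's English description precedes it below -/
import Mathlib

section
/- For a 2-form α on ℝ^5: α(φ(X),φ(Y)) = α(X,Y) for all X,Y if and only if α ∈ Λ²₁ ⊕ Λ²₃; α(φ(X),φ(Y)) = −α(X,Y) for all X,Y if and only if α ∈ Λ²₂; and α(φ(X),φ(Y)) = 0 for all X,Y if and only if α ∈ Λ²₄. -/
open Matrix

/- 2-forms on ℝ^5 are modelled by skew-symmetric 5×5 real matrices
(A i j = α(e_i, e_j)); 3-forms and 4-forms by their coefficient functions. -/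

abbrev M5 := Matrix (Fin 5) (Fin 5) ℝ

/-- The fundamental form Φ = e12 + e34 (as a skew-symmetric matrix). -/
def Phim : M5 :=
  !![0, 1, 0, 0, 0;
     -1, 0, 0, 0, 0;
     0, 0, 0, 1, 0;
     0, 0, -1, 0, 0;
     0, 0, 0, 0, 0]

/-- The Levi-Civita symbol ε(p,q,i,j,k) on the oriented ℝ^5. -/
def eps (p q i j k : Fin 5) : ℝ :=
  Matrix.det (Matrix.of ![(Pi.single p 1 : Fin 5 → ℝ), Pi.single q 1,
    Pi.single i 1, Pi.single j 1, Pi.single k 1])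

/-- Hodge star Λ² → Λ³: (*α)(e_i,e_j,e_k) = ½ Σ_{p,q} α_{pq} ε(p,q,i,j,k). -/
noncomputable def star3 (A : M5) (i j k : Fin 5) : ℝ :=
  (1 / 2) * ∑ p : Fin 5, ∑ q : Fin 5, A p q * eps p q i j k

/-- Wedge with η = e5: (η∧α)(e_i,e_j,e_k). -/
def etaw (A : M5) (i j k : Fin 5) : ℝ :=
  (if i = (4 : Fin 5) then (1 : ℝ) else 0) * A j k
    - (if j = (4 : Fin 5) then (1 : ℝ) else 0) * A i k
    + (if k = (4 : Fin 5) then (1 : ℝ) else 0) * A i j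

/-- Wedge with Φ: (Φ∧α)(e_i,e_j,e_k,e_l). -/
def phiw (A : M5) (i j k l : Fin 5) : ℝ :=
  Phim i j * A k l - Phim i k * A j l + Phim i l * A j k
    + Phim j k * A i l - Phim j l * A i k + Phim k l * A i j

/-- Λ²₁ = ℝ·Φ. -/
def L1 : Set M5 := {A | ∃ t : ℝ, A = t • Phim}

/-- Λ²₂ = {α skew | Φ∧α = 0 and *α = η∧α}. -/
def L2 : Set M5 :=
  {A | Aᵀ = -A ∧ (∀ i j k l, phiw A i j k l = 0) ∧ ∀ i j k, star3 A i j k = etaw A i j k}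

/-- Λ²₃ = {α skew | *α = -η∧α}. -/
def L3 : Set M5 := {A | Aᵀ = -A ∧ ∀ i j k, star3 A i j k = -etaw A i j k}

/-- Λ²₄ = {α skew | η∧α = 0}. -/
def L4 : Set M5 := {A | Aᵀ = -A ∧ ∀ i j k, etaw A i j k = 0}

/-- The inner product on 2-forms, ⟨α,β⟩ = ½ Σ α_{ij} β_{ij}. -/
noncomputable def frob (A B : M5) : ℝ := (1 / 2) * ∑ i : Fin 5, ∑ j : Fin 5, A i j * B i j


/-- The bilinear form corresponding to a matrix A: α(X,Y) = Xᵀ A Y. -/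
noncomputable def bilin (A : M5) (X Y : Fin 5 → ℝ) : ℝ := X ⬝ᵥ A.mulVec Y


section Aux

set_option maxHeartbeats 2000000 in
theorem det_fin_five (M : Matrix (Fin 5) (Fin 5) ℝ) : M.det =
      M 0 0*M 1 1*M 2 2*M 3 3*M 4 4
      - M 0 0*M 1 1*M 2 2*M 3 4*M 4 3
      - M 0 0*M 1 1*M 2 3*M 3 2*M 4 4
      + M 0 0*M 1 1*M 2 3*M 3 4*M 4 2
      + M 0 0*M 1 1*M 2 4*M 3 2*M 4 3
      - M 0 0*M 1 1*M 2 4*M 3 3*M 4 2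
      - M 0 0*M 1 2*M 2 1*M 3 3*M 4 4
      + M 0 0*M 1 2*M 2 1*M 3 4*M 4 3
      + M 0 0*M 1 2*M 2 3*M 3 1*M 4 4
      - M 0 0*M 1 2*M 2 3*M 3 4*M 4 1
      - M 0 0*M 1 2*M 2 4*M 3 1*M 4 3
      + M 0 0*M 1 2*M 2 4*M 3 3*M 4 1
      + M 0 0*M 1 3*M 2 1*M 3 2*M 4 4
      - M 0 0*M 1 3*M 2 1*M 3 4*M 4 2
      - M 0 0*M 1 3*M 2 2*M 3 1*M 4 4
      + M 0 0*M 1 3*M 2 2*M 3 4*M 4 1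
      + M 0 0*M 1 3*M 2 4*M 3 1*M 4 2
      - M 0 0*M 1 3*M 2 4*M 3 2*M 4 1
      - M 0 0*M 1 4*M 2 1*M 3 2*M 4 3
      + M 0 0*M 1 4*M 2 1*M 3 3*M 4 2
      + M 0 0*M 1 4*M 2 2*M 3 1*M 4 3
      - M 0 0*M 1 4*M 2 2*M 3 3*M 4 1
      - M 0 0*M 1 4*M 2 3*M 3 1*M 4 2
      + M 0 0*M 1 4*M 2 3*M 3 2*M 4 1
      - M 0 1*M 1 0*M 2 2*M 3 3*M 4 4
      + M 0 1*M 1 0*M 2 2*M 3 4*M 4 3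
      + M 0 1*M 1 0*M 2 3*M 3 2*M 4 4
      - M 0 1*M 1 0*M 2 3*M 3 4*M 4 2
      - M 0 1*M 1 0*M 2 4*M 3 2*M 4 3
      + M 0 1*M 1 0*M 2 4*M 3 3*M 4 2
      + M 0 1*M 1 2*M 2 0*M 3 3*M 4 4
      - M 0 1*M 1 2*M 2 0*M 3 4*M 4 3
      - M 0 1*M 1 2*M 2 3*M 3 0*M 4 4
      + M 0 1*M 1 2*M 2 3*M 3 4*M 4 0
      + M 0 1*M 1 2*M 2 4*M 3 0*M 4 3
      - M 0 1*M 1 2*M 2 4*M 3 3*M 4 0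
      - M 0 1*M 1 3*M 2 0*M 3 2*M 4 4
      + M 0 1*M 1 3*M 2 0*M 3 4*M 4 2
      + M 0 1*M 1 3*M 2 2*M 3 0*M 4 4
      - M 0 1*M 1 3*M 2 2*M 3 4*M 4 0
      - M 0 1*M 1 3*M 2 4*M 3 0*M 4 2
      + M 0 1*M 1 3*M 2 4*M 3 2*M 4 0
      + M 0 1*M 1 4*M 2 0*M 3 2*M 4 3
      - M 0 1*M 1 4*M 2 0*M 3 3*M 4 2
      - M 0 1*M 1 4*M 2 2*M 3 0*M 4 3
      + M 0 1*M 1 4*M 2 2*M 3 3*M 4 0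
      + M 0 1*M 1 4*M 2 3*M 3 0*M 4 2
      - M 0 1*M 1 4*M 2 3*M 3 2*M 4 0
      + M 0 2*M 1 0*M 2 1*M 3 3*M 4 4
      - M 0 2*M 1 0*M 2 1*M 3 4*M 4 3
      - M 0 2*M 1 0*M 2 3*M 3 1*M 4 4
      + M 0 2*M 1 0*M 2 3*M 3 4*M 4 1
      + M 0 2*M 1 0*M 2 4*M 3 1*M 4 3
      - M 0 2*M 1 0*M 2 4*M 3 3*M 4 1
      - M 0 2*M 1 1*M 2 0*M 3 3*M 4 4
      + M 0 2*M 1 1*M 2 0*M 3 4*M 4 3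
      + M 0 2*M 1 1*M 2 3*M 3 0*M 4 4
      - M 0 2*M 1 1*M 2 3*M 3 4*M 4 0
      - M 0 2*M 1 1*M 2 4*M 3 0*M 4 3
      + M 0 2*M 1 1*M 2 4*M 3 3*M 4 0
      + M 0 2*M 1 3*M 2 0*M 3 1*M 4 4
      - M 0 2*M 1 3*M 2 0*M 3 4*M 4 1
      - M 0 2*M 1 3*M 2 1*M 3 0*M 4 4
      + M 0 2*M 1 3*M 2 1*M 3 4*M 4 0
      + M 0 2*M 1 3*M 2 4*M 3 0*M 4 1
      - M 0 2*M 1 3*M 2 4*M 3 1*M 4 0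
      - M 0 2*M 1 4*M 2 0*M 3 1*M 4 3
      + M 0 2*M 1 4*M 2 0*M 3 3*M 4 1
      + M 0 2*M 1 4*M 2 1*M 3 0*M 4 3
      - M 0 2*M 1 4*M 2 1*M 3 3*M 4 0
      - M 0 2*M 1 4*M 2 3*M 3 0*M 4 1
      + M 0 2*M 1 4*M 2 3*M 3 1*M 4 0
      - M 0 3*M 1 0*M 2 1*M 3 2*M 4 4
      + M 0 3*M 1 0*M 2 1*M 3 4*M 4 2
      + M 0 3*M 1 0*M 2 2*M 3 1*M 4 4
      - M 0 3*M 1 0*M 2 2*M 3 4*M 4 1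
      - M 0 3*M 1 0*M 2 4*M 3 1*M 4 2
      + M 0 3*M 1 0*M 2 4*M 3 2*M 4 1
      + M 0 3*M 1 1*M 2 0*M 3 2*M 4 4
      - M 0 3*M 1 1*M 2 0*M 3 4*M 4 2
      - M 0 3*M 1 1*M 2 2*M 3 0*M 4 4
      + M 0 3*M 1 1*M 2 2*M 3 4*M 4 0
      + M 0 3*M 1 1*M 2 4*M 3 0*M 4 2
      - M 0 3*M 1 1*M 2 4*M 3 2*M 4 0
      - M 0 3*M 1 2*M 2 0*M 3 1*M 4 4
      + M 0 3*M 1 2*M 2 0*M 3 4*M 4 1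
      + M 0 3*M 1 2*M 2 1*M 3 0*M 4 4
      - M 0 3*M 1 2*M 2 1*M 3 4*M 4 0
      - M 0 3*M 1 2*M 2 4*M 3 0*M 4 1
      + M 0 3*M 1 2*M 2 4*M 3 1*M 4 0
      + M 0 3*M 1 4*M 2 0*M 3 1*M 4 2
      - M 0 3*M 1 4*M 2 0*M 3 2*M 4 1
      - M 0 3*M 1 4*M 2 1*M 3 0*M 4 2
      + M 0 3*M 1 4*M 2 1*M 3 2*M 4 0
      + M 0 3*M 1 4*M 2 2*M 3 0*M 4 1
      - M 0 3*M 1 4*M 2 2*M 3 1*M 4 0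
      + M 0 4*M 1 0*M 2 1*M 3 2*M 4 3
      - M 0 4*M 1 0*M 2 1*M 3 3*M 4 2
      - M 0 4*M 1 0*M 2 2*M 3 1*M 4 3
      + M 0 4*M 1 0*M 2 2*M 3 3*M 4 1
      + M 0 4*M 1 0*M 2 3*M 3 1*M 4 2
      - M 0 4*M 1 0*M 2 3*M 3 2*M 4 1
      - M 0 4*M 1 1*M 2 0*M 3 2*M 4 3
      + M 0 4*M 1 1*M 2 0*M 3 3*M 4 2
      + M 0 4*M 1 1*M 2 2*M 3 0*M 4 3
      - M 0 4*M 1 1*M 2 2*M 3 3*M 4 0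
      - M 0 4*M 1 1*M 2 3*M 3 0*M 4 2
      + M 0 4*M 1 1*M 2 3*M 3 2*M 4 0
      + M 0 4*M 1 2*M 2 0*M 3 1*M 4 3
      - M 0 4*M 1 2*M 2 0*M 3 3*M 4 1
      - M 0 4*M 1 2*M 2 1*M 3 0*M 4 3
      + M 0 4*M 1 2*M 2 1*M 3 3*M 4 0
      + M 0 4*M 1 2*M 2 3*M 3 0*M 4 1
      - M 0 4*M 1 2*M 2 3*M 3 1*M 4 0
      - M 0 4*M 1 3*M 2 0*M 3 1*M 4 2
      + M 0 4*M 1 3*M 2 0*M 3 2*M 4 1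
      + M 0 4*M 1 3*M 2 1*M 3 0*M 4 2
      - M 0 4*M 1 3*M 2 1*M 3 2*M 4 0
      - M 0 4*M 1 3*M 2 2*M 3 0*M 4 1
      + M 0 4*M 1 3*M 2 2*M 3 1*M 4 0 := by
  simp (config := { decide := true }) [Matrix.det_succ_row_zero, Fin.sum_univ_succ,
    Fin.succAbove, Matrix.det_fin_three, Matrix.submatrix_apply,
    show ((2:Fin 3).succ : Fin 4) = 3 from rfl, show (Fin.castSucc (2:Fin 3) : Fin 4) = 2 from rfl,
    show ((2:Fin 4).succ : Fin 5) = 3 from rfl, show ((3:Fin 4).succ : Fin 5) = 4 from rfl,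
    show (Fin.castSucc (2:Fin 4) : Fin 5) = 2 from rfl, show (Fin.castSucc (3:Fin 4) : Fin 5) = 3 from rfl]
  ring

lemma eps_swap12 (p q i j k : Fin 5) : eps p q j i k = - eps p q i j k := by
  have h : (Matrix.of ![(Pi.single p 1 : Fin 5 → ℝ), Pi.single q 1,
      Pi.single j 1, Pi.single i 1, Pi.single k 1]) =
      (Matrix.of ![(Pi.single p 1 : Fin 5 → ℝ), Pi.single q 1,
      Pi.single i 1, Pi.single j 1, Pi.single k 1]).submatrix (Equiv.swap 2 3) id := by
    ext r c
    fin_cases r <;> simp [Equiv.swap_apply_def]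
  rw [eps, h, Matrix.det_permute, Equiv.Perm.sign_swap (by decide)]
  simp [eps]

lemma eps_swap23 (p q i j k : Fin 5) : eps p q i k j = - eps p q i j k := by
  have h : (Matrix.of ![(Pi.single p 1 : Fin 5 → ℝ), Pi.single q 1,
      Pi.single i 1, Pi.single k 1, Pi.single j 1]) =
      (Matrix.of ![(Pi.single p 1 : Fin 5 → ℝ), Pi.single q 1,
      Pi.single i 1, Pi.single j 1, Pi.single k 1]).submatrix (Equiv.swap 3 4) id := by
    ext r c
    fin_cases r <;> simp [Equiv.swap_apply_def]
  rw [eps, h, Matrix.det_permute, Equiv.Perm.sign_swap (by decide)]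
  simp [eps]

lemma star3_swap12 (A : M5) (i j k : Fin 5) : star3 A j i k = -star3 A i j k := by
  have h : ∀ p q, A p q * eps p q j i k = -(A p q * eps p q i j k) := fun p q => by
    rw [eps_swap12]; ring
  simp only [star3, h, Finset.sum_neg_distrib]
  ring

lemma star3_swap23 (A : M5) (i j k : Fin 5) : star3 A i k j = -star3 A i j k := by
  have h : ∀ p q, A p q * eps p q i k j = -(A p q * eps p q i j k) := fun p q => by
    rw [eps_swap23]; ring
  simp only [star3, h, Finset.sum_neg_distrib]
  ring

lemma etaw_swap12 (A : M5) (hs : ∀ i j, A j i = -A i j) (i j k : Fin 5) :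
    etaw A j i k = -etaw A i j k := by
  simp only [etaw]
  linear_combination (if k = (4 : Fin 5) then (1:ℝ) else 0) * hs i j

lemma etaw_swap23 (A : M5) (hs : ∀ i j, A j i = -A i j) (i j k : Fin 5) :
    etaw A i k j = -etaw A i j k := by
  simp only [etaw]
  linear_combination (if i = (4 : Fin 5) then (1:ℝ) else 0) * hs j k

lemma red3 (f : Fin 5 → Fin 5 → Fin 5 → ℝ)
    (h12 : ∀ i j k, f j i k = -f i j k) (h23 : ∀ i j k, f i k j = -f i j k)
    (hsort : ∀ i j k, i < j → j < k → f i j k = 0) : ∀ i j k, f i j k = 0 := by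
  have self12 : ∀ a b, f a a b = 0 := fun a b => by have := h12 a a b; linarith
  have self23 : ∀ a b, f a b b = 0 := fun a b => by have := h23 a b b; linarith
  have h13 : ∀ a b c, f c b a = -f a b c := by
    intro a b c
    have e1 := h12 b c a
    have e2 := h23 b a c
    have e3 := h12 a b c
    linarith
  have self13 : ∀ a b, f a b a = 0 := fun a b => by have := h13 a b a; linarith
  intro i j k
  rcases lt_trichotomy i j with hij|rfl|hij
  · rcases lt_trichotomy j k with hjk|rfl|hjk
    · exact hsort _ _ _ hij hjk
    · exact self23 _ _
    · rcases lt_trichotomy i k with hik|rfl|hik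
      · have e1 := h23 i k j
        have e2 := hsort i k j hik hjk
        linarith
      · exact self13 _ _
      · have e1 := h23 i j k
        have e2 := h12 k i j
        have e3 := hsort k i j hik hij
        linarith
  · exact self12 _ _
  · rcases lt_trichotomy i k with hik|rfl|hik
    · have e1 := h12 j i k
      have e2 := hsort j i k hij hik
      linarith
    · exact self13 _ _
    · rcases lt_trichotomy j k with hjk|rfl|hjk
      · have e1 := h13 k j i
        have e2 := h12 j k i
        have e3 := hsort j k i hjk hik
        linarith
      · exact self23 _ _
      · have e1 := h13 k j i
        have e2 := hsort k j i hjk hij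
        linarith

set_option maxHeartbeats 1000000 in
set_option maxRecDepth 10000 in
lemma star3_012 (A : M5) : star3 A 0 1 2 = ((1/2) * (A 3 4 - A 4 3)) := by
  simp (config := { decide := true }) [star3, eps, Fin.sum_univ_five, det_fin_five,
    Pi.single_apply, Matrix.vecHead, Matrix.vecTail, Function.comp]
  ring

set_option maxHeartbeats 1000000 in
set_option maxRecDepth 10000 in
lemma star3_013 (A : M5) : star3 A 0 1 3 = -((1/2) * (A 2 4 - A 4 2)) := by
  simp (config := { decide := true }) [star3, eps, Fin.sum_univ_five, det_fin_five,
    Pi.single_apply, Matrix.vecHead, Matrix.vecTail, Function.comp]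
  ring

set_option maxHeartbeats 1000000 in
set_option maxRecDepth 10000 in
lemma star3_014 (A : M5) : star3 A 0 1 4 = ((1/2) * (A 2 3 - A 3 2)) := by
  simp (config := { decide := true }) [star3, eps, Fin.sum_univ_five, det_fin_five,
    Pi.single_apply, Matrix.vecHead, Matrix.vecTail, Function.comp]
  ring

set_option maxHeartbeats 1000000 in
set_option maxRecDepth 10000 in
lemma star3_023 (A : M5) : star3 A 0 2 3 = ((1/2) * (A 1 4 - A 4 1)) := by
  simp (config := { decide := true }) [star3, eps, Fin.sum_univ_five, det_fin_five,
    Pi.single_apply, Matrix.vecHead, Matrix.vecTail, Function.comp]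
  ring

set_option maxHeartbeats 1000000 in
set_option maxRecDepth 10000 in
lemma star3_024 (A : M5) : star3 A 0 2 4 = -((1/2) * (A 1 3 - A 3 1)) := by
  simp (config := { decide := true }) [star3, eps, Fin.sum_univ_five, det_fin_five,
    Pi.single_apply, Matrix.vecHead, Matrix.vecTail, Function.comp]
  ring

set_option maxHeartbeats 1000000 in
set_option maxRecDepth 10000 in
lemma star3_034 (A : M5) : star3 A 0 3 4 = ((1/2) * (A 1 2 - A 2 1)) := by
  simp (config := { decide := true }) [star3, eps, Fin.sum_univ_five, det_fin_five,
    Pi.single_apply, Matrix.vecHead, Matrix.vecTail, Function.comp]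
  ring

set_option maxHeartbeats 1000000 in
set_option maxRecDepth 10000 in
lemma star3_123 (A : M5) : star3 A 1 2 3 = -((1/2) * (A 0 4 - A 4 0)) := by
  simp (config := { decide := true }) [star3, eps, Fin.sum_univ_five, det_fin_five,
    Pi.single_apply, Matrix.vecHead, Matrix.vecTail, Function.comp]
  ring

set_option maxHeartbeats 1000000 in
set_option maxRecDepth 10000 in
lemma star3_124 (A : M5) : star3 A 1 2 4 = ((1/2) * (A 0 3 - A 3 0)) := by
  simp (config := { decide := true }) [star3, eps, Fin.sum_univ_five, det_fin_five,
    Pi.single_apply, Matrix.vecHead, Matrix.vecTail, Function.comp]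
  ring

set_option maxHeartbeats 1000000 in
set_option maxRecDepth 10000 in
lemma star3_134 (A : M5) : star3 A 1 3 4 = -((1/2) * (A 0 2 - A 2 0)) := by
  simp (config := { decide := true }) [star3, eps, Fin.sum_univ_five, det_fin_five,
    Pi.single_apply, Matrix.vecHead, Matrix.vecTail, Function.comp]
  ring

set_option maxHeartbeats 1000000 in
set_option maxRecDepth 10000 in
lemma star3_234 (A : M5) : star3 A 2 3 4 = ((1/2) * (A 0 1 - A 1 0)) := by
  simp (config := { decide := true }) [star3, eps, Fin.sum_univ_five, det_fin_five,
    Pi.single_apply, Matrix.vecHead, Matrix.vecTail, Function.comp]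
  ring

end Aux

section Aux2

lemma PhimT : Phimᵀ = -Phim := by
  ext i j
  fin_cases i <;> fin_cases j <;> simp [Phim, Matrix.vecHead, Matrix.vecTail]

lemma Phim_skew : ∀ i j, Phim j i = -Phim i j := by
  intro i j
  have := congrFun (congrFun PhimT i) j
  simpa using this

set_option maxHeartbeats 1000000 in
lemma PtAP (A : M5) : Phimᵀ * A * Phim =
    !![A 1 1, -(A 1 0), A 1 3, -(A 1 2), 0;
       -(A 0 1), A 0 0, -(A 0 3), A 0 2, 0;
       A 3 1, -(A 3 0), A 3 3, -(A 3 2), 0;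
       -(A 2 1), A 2 0, -(A 2 3), A 2 2, 0;
       0, 0, 0, 0, 0] := by
  ext i j
  fin_cases i <;> fin_cases j <;>
    simp [Matrix.mul_apply, Phim, Fin.sum_univ_five, Matrix.vecHead, Matrix.vecTail] <;>
    ring

/-- integer model of Phim -/
def PhimZ : Matrix (Fin 5) (Fin 5) ℤ :=
  !![0, 1, 0, 0, 0;
     -1, 0, 0, 0, 0;
     0, 0, 0, 1, 0;
     0, 0, -1, 0, 0;
     0, 0, 0, 0, 0]

def phiwZ (B : Matrix (Fin 5) (Fin 5) ℤ) (i j k l : Fin 5) : ℤ :=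
  PhimZ i j * B k l - PhimZ i k * B j l + PhimZ i l * B j k
    + PhimZ j k * B i l - PhimZ j l * B i k + PhimZ k l * B i j

lemma Phim_cast : ∀ i j, Phim i j = ((PhimZ i j : ℤ) : ℝ) := by
  intro i j
  fin_cases i <;> fin_cases j <;> norm_num [Phim, PhimZ, Matrix.vecHead, Matrix.vecTail]

lemma phiw_cast (B : Matrix (Fin 5) (Fin 5) ℤ) (i j k l : Fin 5) :
    phiw (B.map (Int.cast : ℤ → ℝ)) i j k l = ((phiwZ B i j k l : ℤ) : ℝ) := by
  simp only [phiw, phiwZ, Matrix.map_apply, Phim_cast]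
  push_cast
  ring

lemma phiw_add (B C : M5) (i j k l : Fin 5) :
    phiw (B + C) i j k l = phiw B i j k l + phiw C i j k l := by
  simp only [phiw, Matrix.add_apply]; ring

lemma phiw_smul (t : ℝ) (B : M5) (i j k l : Fin 5) :
    phiw (t • B) i j k l = t * phiw B i j k l := by
  simp only [phiw, Matrix.smul_apply, smul_eq_mul]; ring

/-- generators of the Λ²₂-plane (entry model) -/
def Z1 : Matrix (Fin 5) (Fin 5) ℤ :=
  !![0, 0, 1, 0, 0;
     0, 0, 0, -1, 0;
     -1, 0, 0, 0, 0;
     0, 1, 0, 0, 0;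
     0, 0, 0, 0, 0]

def Z2 : Matrix (Fin 5) (Fin 5) ℤ :=
  !![0, 0, 0, 1, 0;
     0, 0, 1, 0, 0;
     0, -1, 0, 0, 0;
     -1, 0, 0, 0, 0;
     0, 0, 0, 0, 0]

lemma phiwZ_Z1 : ∀ i j k l, phiwZ Z1 i j k l = 0 := by decide
lemma phiwZ_Z2 : ∀ i j k l, phiwZ Z2 i j k l = 0 := by decide

lemma bilin_transform (P A : M5) (X Y : Fin 5 → ℝ) :
    bilin A (P.mulVec X) (P.mulVec Y) = bilin (Pᵀ * A * P) X Y := by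
  unfold bilin
  rw [Matrix.mulVec_mulVec, Matrix.dotProduct_mulVec, Matrix.dotProduct_mulVec,
    Matrix.vecMul_mulVec, ← Matrix.mul_assoc]

lemma bilin_ext {M N : M5} (h : ∀ X Y, bilin M X Y = bilin N X Y) : M = N := by
  ext i j
  have := h (Pi.single i 1) (Pi.single j 1)
  simpa [bilin, Matrix.mulVec_single, single_dotProduct] using this

lemma bilin_neg (A : M5) (X Y : Fin 5 → ℝ) : bilin (-A) X Y = -bilin A X Y := by
  simp [bilin, Matrix.neg_mulVec, dotProduct_neg]

lemma bilin_zero (X Y : Fin 5 → ℝ) : bilin (0 : M5) X Y = 0 := by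
  simp [bilin, Matrix.zero_mulVec]

end Aux2

section Aux3

lemma L3_entries (A : M5) (hs : ∀ i j, A j i = -A i j)
    (h : ∀ i j k, star3 A i j k = -etaw A i j k) :
    A 0 1 = -A 2 3 ∧ A 0 2 = A 1 3 ∧ A 0 3 = -A 1 2 ∧
      A 0 4 = 0 ∧ A 1 4 = 0 ∧ A 2 4 = 0 ∧ A 3 4 = 0 := by
  have t1 := h 2 3 4; rw [star3_234] at t1
  have t2 := h 1 3 4; rw [star3_134] at t2
  have t3 := h 1 2 4; rw [star3_124] at t3
  have t4 := h 1 2 3; rw [star3_123] at t4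
  have t5 := h 0 2 3; rw [star3_023] at t5
  have t6 := h 0 1 3; rw [star3_013] at t6
  have t7 := h 0 1 2; rw [star3_012] at t7
  simp (config := { decide := true }) [etaw] at t1 t2 t3 t4 t5 t6 t7
  refine ⟨?_, ?_, ?_, ?_, ?_, ?_, ?_⟩ <;> linarith [hs 0 0, hs 0 1, hs 0 2, hs 0 3, hs 0 4, hs 1 0, hs 1 1, hs 1 2, hs 1 3, hs 1 4, hs 2 0, hs 2 1, hs 2 2, hs 2 3, hs 2 4, hs 3 0, hs 3 1, hs 3 2, hs 3 3, hs 3 4, hs 4 0, hs 4 1, hs 4 2, hs 4 3, hs 4 4]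

lemma L2star_entries (A : M5) (hs : ∀ i j, A j i = -A i j)
    (h : ∀ i j k, star3 A i j k = etaw A i j k) :
    A 0 1 = A 2 3 ∧ A 0 2 = -A 1 3 ∧ A 0 3 = A 1 2 ∧
      A 0 4 = 0 ∧ A 1 4 = 0 ∧ A 2 4 = 0 ∧ A 3 4 = 0 := by
  have t1 := h 2 3 4; rw [star3_234] at t1
  have t2 := h 1 3 4; rw [star3_134] at t2
  have t3 := h 1 2 4; rw [star3_124] at t3
  have t4 := h 1 2 3; rw [star3_123] at t4
  have t5 := h 0 2 3; rw [star3_023] at t5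
  have t6 := h 0 1 3; rw [star3_013] at t6
  have t7 := h 0 1 2; rw [star3_012] at t7
  simp (config := { decide := true }) [etaw] at t1 t2 t3 t4 t5 t6 t7
  refine ⟨?_, ?_, ?_, ?_, ?_, ?_, ?_⟩ <;> linarith [hs 0 0, hs 0 1, hs 0 2, hs 0 3, hs 0 4, hs 1 0, hs 1 1, hs 1 2, hs 1 3, hs 1 4, hs 2 0, hs 2 1, hs 2 2, hs 2 3, hs 2 4, hs 3 0, hs 3 1, hs 3 2, hs 3 3, hs 3 4, hs 4 0, hs 4 1, hs 4 2, hs 4 3, hs 4 4]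

set_option maxHeartbeats 4000000 in
set_option maxRecDepth 40000 in
lemma L3_of_entries (A : M5) (hs : ∀ i j, A j i = -A i j)
    (e1 : A 0 1 = -A 2 3) (e2 : A 0 2 = A 1 3) (e3 : A 0 3 = -A 1 2)
    (e4 : A 0 4 = 0) (e5 : A 1 4 = 0) (e6 : A 2 4 = 0) (e7 : A 3 4 = 0) :
    ∀ i j k, star3 A i j k = -etaw A i j k := by
  have main : ∀ i j k, star3 A i j k + etaw A i j k = 0 := by
    apply red3
    · intro i j k; rw [star3_swap12, etaw_swap12 A hs]; ring
    · intro i j k; rw [star3_swap23, etaw_swap23 A hs]; ring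
    · intro i j k hij hjk
      fin_cases i <;> fin_cases j <;> fin_cases k <;>
        first
          | exact absurd hij (by decide)
          | exact absurd hjk (by decide)
          | (simp (config := { decide := true }) [star3, eps, Fin.sum_univ_five, det_fin_five, Pi.single_apply, Matrix.vecHead, Matrix.vecTail, Function.comp, etaw] <;>
             linarith [e1, e2, e3, e4, e5, e6, e7, hs 0 0, hs 0 1, hs 0 2, hs 0 3, hs 0 4, hs 1 0, hs 1 1, hs 1 2, hs 1 3, hs 1 4, hs 2 0, hs 2 1, hs 2 2, hs 2 3, hs 2 4, hs 3 0, hs 3 1, hs 3 2, hs 3 3, hs 3 4, hs 4 0, hs 4 1, hs 4 2, hs 4 3, hs 4 4])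
  intro i j k
  have := main i j k
  linarith

set_option maxHeartbeats 4000000 in
set_option maxRecDepth 40000 in
lemma L2star_of_entries (A : M5) (hs : ∀ i j, A j i = -A i j)
    (e1 : A 0 1 = A 2 3) (e2 : A 0 2 = -A 1 3) (e3 : A 0 3 = A 1 2)
    (e4 : A 0 4 = 0) (e5 : A 1 4 = 0) (e6 : A 2 4 = 0) (e7 : A 3 4 = 0) :
    ∀ i j k, star3 A i j k = etaw A i j k := by
  have main : ∀ i j k, star3 A i j k - etaw A i j k = 0 := by
    apply red3
    · intro i j k; rw [star3_swap12, etaw_swap12 A hs]; ring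
    · intro i j k; rw [star3_swap23, etaw_swap23 A hs]; ring
    · intro i j k hij hjk
      fin_cases i <;> fin_cases j <;> fin_cases k <;>
        first
          | exact absurd hij (by decide)
          | exact absurd hjk (by decide)
          | (simp (config := { decide := true }) [star3, eps, Fin.sum_univ_five, det_fin_five, Pi.single_apply, Matrix.vecHead, Matrix.vecTail, Function.comp, etaw] <;>
             linarith [e1, e2, e3, e4, e5, e6, e7, hs 0 0, hs 0 1, hs 0 2, hs 0 3, hs 0 4, hs 1 0, hs 1 1, hs 1 2, hs 1 3, hs 1 4, hs 2 0, hs 2 1, hs 2 2, hs 2 3, hs 2 4, hs 3 0, hs 3 1, hs 3 2, hs 3 3, hs 3 4, hs 4 0, hs 4 1, hs 4 2, hs 4 3, hs 4 4])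
  intro i j k
  have := main i j k
  linarith

set_option maxHeartbeats 2000000 in
lemma L4_of_entries (A : M5) (hs : ∀ i j, A j i = -A i j)
    (e1 : A 0 1 = 0) (e2 : A 0 2 = 0) (e3 : A 0 3 = 0)
    (e4 : A 1 2 = 0) (e5 : A 1 3 = 0) (e6 : A 2 3 = 0) :
    ∀ i j k, etaw A i j k = 0 := by
  apply red3
  · intro i j k; exact etaw_swap12 A hs i j k
  · intro i j k; exact etaw_swap23 A hs i j k
  · intro i j k hij hjk
    fin_cases i <;> fin_cases j <;> fin_cases k <;>
      first
        | exact absurd hij (by decide)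
        | exact absurd hjk (by decide)
        | (simp (config := { decide := true }) [etaw] <;>
           linarith [e1, e2, e3, e4, e5, e6, hs 0 0, hs 0 1, hs 0 2, hs 0 3, hs 0 4, hs 1 0, hs 1 1, hs 1 2, hs 1 3, hs 1 4, hs 2 0, hs 2 1, hs 2 2, hs 2 3, hs 2 4, hs 3 0, hs 3 1, hs 3 2, hs 3 3, hs 3 4, hs 4 0, hs 4 1, hs 4 2, hs 4 3, hs 4 4])

set_option maxHeartbeats 2000000 in
lemma phiw_of_entries (A : M5) (hs : ∀ i j, A j i = -A i j)
    (e1 : A 0 1 = 0) (e2 : A 2 3 = 0) (e3 : A 0 2 = -A 1 3) (e4 : A 0 3 = A 1 2)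
    (z0 : A 0 4 = 0) (z1 : A 1 4 = 0) (z2 : A 2 4 = 0) (z3 : A 3 4 = 0) :
    ∀ i j k l, phiw A i j k l = 0 := by
  have hrep : A = (A 0 2) • (Z1.map (Int.cast : ℤ → ℝ)) + (A 0 3) • (Z2.map (Int.cast : ℤ → ℝ)) := by
    ext i j
    fin_cases i <;> fin_cases j <;>
      simp [Z1, Z2, Matrix.map_apply, Matrix.vecHead, Matrix.vecTail] <;>
      linarith [e1, e2, e3, e4, z0, z1, z2, z3, hs 0 0, hs 0 1, hs 0 2, hs 0 3, hs 0 4, hs 1 0, hs 1 1, hs 1 2, hs 1 3, hs 1 4, hs 2 0, hs 2 1, hs 2 2, hs 2 3, hs 2 4, hs 3 0, hs 3 1, hs 3 2, hs 3 3, hs 3 4, hs 4 0, hs 4 1, hs 4 2, hs 4 3, hs 4 4]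
  intro i j k l
  rw [hrep, phiw_add, phiw_smul, phiw_smul, phiw_cast, phiw_cast, phiwZ_Z1, phiwZ_Z2]
  norm_num

set_option maxHeartbeats 1000000 in
lemma C1_iff (A : M5) (hs : ∀ i j, A j i = -A i j) :
    Phimᵀ * A * Phim = A ↔
      (A 0 2 = A 1 3 ∧ A 0 3 = -A 1 2 ∧ A 0 4 = 0 ∧ A 1 4 = 0 ∧ A 2 4 = 0 ∧ A 3 4 = 0) := by
  rw [PtAP]
  constructor
  · intro h
    have g1 := congrFun (congrFun h 0) 2
    have g2 := congrFun (congrFun h 0) 3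
    have g3 := congrFun (congrFun h 0) 4
    have g4 := congrFun (congrFun h 1) 4
    have g5 := congrFun (congrFun h 2) 4
    have g6 := congrFun (congrFun h 3) 4
    simp [Matrix.vecHead, Matrix.vecTail] at g1 g2 g3 g4 g5 g6
    refine ⟨?_, ?_, ?_, ?_, ?_, ?_⟩ <;> linarith [hs 0 0, hs 0 1, hs 0 2, hs 0 3, hs 0 4, hs 1 0, hs 1 1, hs 1 2, hs 1 3, hs 1 4, hs 2 0, hs 2 1, hs 2 2, hs 2 3, hs 2 4, hs 3 0, hs 3 1, hs 3 2, hs 3 3, hs 3 4, hs 4 0, hs 4 1, hs 4 2, hs 4 3, hs 4 4]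
  · rintro ⟨e1, e2, e3, e4, e5, e6⟩
    ext i j
    fin_cases i <;> fin_cases j <;> simp [Matrix.vecHead, Matrix.vecTail] <;>
      linarith [e1, e2, e3, e4, e5, e6, hs 0 0, hs 0 1, hs 0 2, hs 0 3, hs 0 4, hs 1 0, hs 1 1, hs 1 2, hs 1 3, hs 1 4, hs 2 0, hs 2 1, hs 2 2, hs 2 3, hs 2 4, hs 3 0, hs 3 1, hs 3 2, hs 3 3, hs 3 4, hs 4 0, hs 4 1, hs 4 2, hs 4 3, hs 4 4]

set_option maxHeartbeats 1000000 in
lemma C2_iff (A : M5) (hs : ∀ i j, A j i = -A i j) :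
    Phimᵀ * A * Phim = -A ↔
      (A 0 1 = 0 ∧ A 2 3 = 0 ∧ A 0 2 = -A 1 3 ∧ A 0 3 = A 1 2 ∧
        A 0 4 = 0 ∧ A 1 4 = 0 ∧ A 2 4 = 0 ∧ A 3 4 = 0) := by
  rw [PtAP]
  constructor
  · intro h
    have g1 := congrFun (congrFun h 0) 1
    have g2 := congrFun (congrFun h 2) 3
    have g3 := congrFun (congrFun h 0) 2
    have g4 := congrFun (congrFun h 0) 3
    have g5 := congrFun (congrFun h 0) 4
    have g6 := congrFun (congrFun h 1) 4
    have g7 := congrFun (congrFun h 2) 4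
    have g8 := congrFun (congrFun h 3) 4
    simp [Matrix.vecHead, Matrix.vecTail] at g1 g2 g3 g4 g5 g6 g7 g8
    refine ⟨?_, ?_, ?_, ?_, ?_, ?_, ?_, ?_⟩ <;> linarith [hs 0 0, hs 0 1, hs 0 2, hs 0 3, hs 0 4, hs 1 0, hs 1 1, hs 1 2, hs 1 3, hs 1 4, hs 2 0, hs 2 1, hs 2 2, hs 2 3, hs 2 4, hs 3 0, hs 3 1, hs 3 2, hs 3 3, hs 3 4, hs 4 0, hs 4 1, hs 4 2, hs 4 3, hs 4 4]
  · rintro ⟨e1, e2, e3, e4, e5, e6, e7, e8⟩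
    ext i j
    fin_cases i <;> fin_cases j <;> simp [Matrix.vecHead, Matrix.vecTail] <;>
      linarith [e1, e2, e3, e4, e5, e6, e7, e8, hs 0 0, hs 0 1, hs 0 2, hs 0 3, hs 0 4, hs 1 0, hs 1 1, hs 1 2, hs 1 3, hs 1 4, hs 2 0, hs 2 1, hs 2 2, hs 2 3, hs 2 4, hs 3 0, hs 3 1, hs 3 2, hs 3 3, hs 3 4, hs 4 0, hs 4 1, hs 4 2, hs 4 3, hs 4 4]

set_option maxHeartbeats 1000000 in
lemma C3_iff (A : M5) (hs : ∀ i j, A j i = -A i j) :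
    Phimᵀ * A * Phim = 0 ↔
      (A 0 1 = 0 ∧ A 0 2 = 0 ∧ A 0 3 = 0 ∧ A 1 2 = 0 ∧ A 1 3 = 0 ∧ A 2 3 = 0) := by
  rw [PtAP]
  constructor
  · intro h
    have g1 := congrFun (congrFun h 0) 1
    have g2 := congrFun (congrFun h 1) 3
    have g3 := congrFun (congrFun h 1) 2
    have g4 := congrFun (congrFun h 0) 3
    have g5 := congrFun (congrFun h 0) 2
    have g6 := congrFun (congrFun h 2) 3
    simp [Matrix.vecHead, Matrix.vecTail] at g1 g2 g3 g4 g5 g6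
    refine ⟨?_, ?_, ?_, ?_, ?_, ?_⟩ <;> linarith [hs 0 0, hs 0 1, hs 0 2, hs 0 3, hs 0 4, hs 1 0, hs 1 1, hs 1 2, hs 1 3, hs 1 4, hs 2 0, hs 2 1, hs 2 2, hs 2 3, hs 2 4, hs 3 0, hs 3 1, hs 3 2, hs 3 3, hs 3 4, hs 4 0, hs 4 1, hs 4 2, hs 4 3, hs 4 4]
  · rintro ⟨e1, e2, e3, e4, e5, e6⟩
    ext i j
    fin_cases i <;> fin_cases j <;> simp [Matrix.vecHead, Matrix.vecTail] <;>
      linarith [e1, e2, e3, e4, e5, e6, hs 0 0, hs 0 1, hs 0 2, hs 0 3, hs 0 4, hs 1 0, hs 1 1, hs 1 2, hs 1 3, hs 1 4, hs 2 0, hs 2 1, hs 2 2, hs 2 3, hs 2 4, hs 3 0, hs 3 1, hs 3 2, hs 3 3, hs 3 4, hs 4 0, hs 4 1, hs 4 2, hs 4 3, hs 4 4]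

end Aux3

/-- for a 2-form α: α(φX,φY) = α(X,Y) iff α ∈ Λ²₁ ⊕ Λ²₃;
α(φX,φY) = -α(X,Y) iff α ∈ Λ²₂; α(φX,φY) = 0 iff α ∈ Λ²₄. -/
theorem stmt3 :
    ∀ A : M5, Aᵀ = -A →
      ((∀ X Y, bilin A (Phim.mulVec X) (Phim.mulVec Y) = bilin A X Y) ↔
        ∃ B ∈ L1, ∃ C ∈ L3, A = B + C) ∧
      ((∀ X Y, bilin A (Phim.mulVec X) (Phim.mulVec Y) = -bilin A X Y) ↔ A ∈ L2) ∧
      ((∀ X Y, bilin A (Phim.mulVec X) (Phim.mulVec Y) = 0) ↔ A ∈ L4) := by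
  intro A hA
  have hs : ∀ i j, A j i = -A i j := fun i j => by
    have := congrFun (congrFun hA i) j
    simpa using this
  have key : ∀ B : M5, (∀ X Y, bilin A (Phim.mulVec X) (Phim.mulVec Y) = bilin B X Y) ↔
      Phimᵀ * A * Phim = B := by
    intro B
    constructor
    · intro h
      exact bilin_ext fun X Y => by rw [← bilin_transform]; exact h X Y
    · intro h X Y
      rw [bilin_transform, h]
  refine ⟨?_, ?_, ?_⟩
  · -- part 1
    rw [key A, C1_iff A hs]
    constructor
    · rintro ⟨e1, e2, e3, e4, e5, e6⟩
      have hC : ∀ i j, (A - ((A 0 1 + A 2 3)/2) • Phim) i j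
          = A i j - ((A 0 1 + A 2 3)/2) * Phim i j := fun i j => by simp
      refine ⟨((A 0 1 + A 2 3)/2) • Phim, ⟨(A 0 1 + A 2 3)/2, rfl⟩,
        A - ((A 0 1 + A 2 3)/2) • Phim, ⟨?_, ?_⟩, by abel⟩
      · ext i j
        simp only [Matrix.transpose_apply, Matrix.sub_apply, Matrix.smul_apply,
          Matrix.neg_apply, smul_eq_mul]
        linear_combination hs i j - ((A 0 1 + A 2 3)/2) * Phim_skew i j
      · apply L3_of_entries
        · intro i j
          rw [hC, hC, Phim_skew]
          linear_combination hs i j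
        all_goals (simp [hC, Phim, Matrix.vecHead, Matrix.vecTail] <;>
          linarith [e1, e2, e3, e4, e5, e6])
    · rintro ⟨B, ⟨t, rfl⟩, C, ⟨hCskew, hCstar⟩, rfl⟩
      have hsC : ∀ i j, C j i = -C i j := fun i j => by
        have := congrFun (congrFun hCskew i) j
        simpa using this
      obtain ⟨c1, c2, c3, c4, c5, c6, c7⟩ := L3_entries C hsC hCstar
      refine ⟨?_, ?_, ?_, ?_, ?_, ?_⟩ <;>
        simp [Matrix.add_apply, Matrix.smul_apply, Phim, Matrix.vecHead, Matrix.vecTail] <;>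
        linarith [c1, c2, c3, c4, c5, c6, c7]
  · -- part 2
    have keyneg : (∀ X Y, bilin A (Phim.mulVec X) (Phim.mulVec Y) = -bilin A X Y) ↔
        Phimᵀ * A * Phim = -A := by
      rw [← key (-A)]
      constructor
      · intro h X Y; rw [bilin_neg]; exact h X Y
      · intro h X Y; rw [← bilin_neg]; exact h X Y
    rw [keyneg, C2_iff A hs]
    constructor
    · rintro ⟨e1, e2, e3, e4, e5, e6, e7, e8⟩
      refine ⟨hA, ?_, ?_⟩
      · exact phiw_of_entries A hs e1 e2 e3 e4 e5 e6 e7 e8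
      · exact L2star_of_entries A hs (by linarith) e3 e4 e5 e6 e7 e8
    · rintro ⟨-, hphi, hstar⟩
      obtain ⟨s1, s2, s3, s4, s5, s6, s7⟩ := L2star_entries A hs hstar
      have p1 := hphi 0 1 2 3
      simp (config := { decide := true }) [phiw, Phim, Matrix.vecHead, Matrix.vecTail] at p1
      refine ⟨?_, ?_, ?_, ?_, ?_, ?_, ?_, ?_⟩ <;> linarith
  · -- part 3
    have key0 : (∀ X Y, bilin A (Phim.mulVec X) (Phim.mulVec Y) = 0) ↔
        Phimᵀ * A * Phim = 0 := by
      rw [← key 0]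
      constructor
      · intro h X Y; rw [bilin_zero]; exact h X Y
      · intro h X Y; rw [← bilin_zero X Y]; exact h X Y
    rw [key0, C3_iff A hs]
    constructor
    · rintro ⟨e1, e2, e3, e4, e5, e6⟩
      exact ⟨hA, L4_of_entries A hs e1 e2 e3 e4 e5 e6⟩
    · rintro ⟨-, h⟩
      have g1 := h 4 0 1
      have g2 := h 4 0 2
      have g3 := h 4 0 3
      have g4 := h 4 1 2
      have g5 := h 4 1 3
      have g6 := h 4 2 3
      simp (config := { decide := true }) [etaw] at g1 g2 g3 g4 g5 g6
      refine ⟨?_, ?_, ?_, ?_, ?_, ?_⟩ <;> linarith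
end

section
/- The space 𝒯 of trilinear forms on ℝ^5 skew-symmetric in the first two arguments decomposes as the direct sum 𝒯₁ ⊕ 𝒯₂ ⊕ 𝒯₃, where 𝒯₁ = {T : ∃ a 1-form α with T(X,Y,Z) = α(X)⟨Y,Z⟩ − α(Y)⟨X,Z⟩}, 𝒯₂ = {T : T(X,Y,Z) = −T(X,Z,Y)} (totally skew-symmetric), and 𝒯₃ = {T : the cyclic sum of T over X,Y,Z vanishes and Σᵢ T(X,eᵢ,eᵢ) = 0}. -/
/- Trilinear forms on the Euclidean space ℝ^5 = Fin 5 → ℝ are modelled as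
functions E → E → E → ℝ together with the trilinearity predicate `IsTri`. -/

abbrev E := Fin 5 → ℝ

/-- The standard inner product of ℝ^5. -/
def dot (X Y : E) : ℝ := ∑ i : Fin 5, X i * Y i

/-- The standard orthonormal basis e₁,…,e₅. -/
def bas (i : Fin 5) : E := Pi.single i 1

/-- Trilinearity of a map E → E → E → ℝ. -/
def IsTri (T : E → E → E → ℝ) : Prop :=
  (∀ a a' b c, T (a + a') b c = T a b c + T a' b c) ∧
  (∀ (r : ℝ) a b c, T (r • a) b c = r * T a b c) ∧
  (∀ a b b' c, T a (b + b') c = T a b c + T a b' c) ∧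
  (∀ (r : ℝ) a b c, T a (r • b) c = r * T a b c) ∧
  (∀ a b c c', T a b (c + c') = T a b c + T a b c') ∧
  (∀ (r : ℝ) a b c, T a b (r • c) = r * T a b c)

/-- 𝒯 = trilinear forms skew-symmetric in the first two arguments. -/
def TT : Set (E → E → E → ℝ) := {T | IsTri T ∧ ∀ X Y Z, T X Y Z = -T Y X Z}

/-- 𝒜 = trilinear forms skew-symmetric in the last two arguments. -/
def AA : Set (E → E → E → ℝ) := {A | IsTri A ∧ ∀ X Y Z, A X Y Z = -A X Z Y}

/-- τ(A)(X,Y,Z) = A(X,Y,Z) - A(Y,X,Z). -/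
def tau (A : E → E → E → ℝ) : E → E → E → ℝ := fun X Y Z => A X Y Z - A Y X Z

/-- 𝒯₁: vectorial torsion. -/
def T1 : Set (E → E → E → ℝ) :=
  {T | T ∈ TT ∧ ∃ α : E →ₗ[ℝ] ℝ, ∀ X Y Z, T X Y Z = α X * dot Y Z - α Y * dot X Z}

/-- 𝒯₂: totally skew-symmetric torsion. -/
def T2 : Set (E → E → E → ℝ) := {T | T ∈ TT ∧ ∀ X Y Z, T X Y Z = -T X Z Y}

/-- 𝒯₃: traceless cyclic torsion. -/
def T3 : Set (E → E → E → ℝ) :=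
  {T | T ∈ TT ∧ (∀ X Y Z, T X Y Z + T Y Z X + T Z X Y = 0) ∧
    ∀ X, ∑ i : Fin 5, T X (bas i) (bas i) = 0}

/-- 𝒜₁: vectorial type. -/
def A1 : Set (E → E → E → ℝ) :=
  {A | A ∈ AA ∧ ∃ α : E →ₗ[ℝ] ℝ, ∀ X Y Z, A X Y Z = α Z * dot X Y - α Y * dot X Z}

/-- 𝒜₂: totally skew-symmetric type. -/
def A2 : Set (E → E → E → ℝ) := {A | A ∈ AA ∧ ∀ X Y Z, A X Y Z = -A Y X Z}

/-- 𝒜₃: traceless cyclic type. -/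
def A3 : Set (E → E → E → ℝ) :=
  {A | A ∈ AA ∧ (∀ X Y Z, A X Y Z + A Y Z X + A Z X Y = 0) ∧
    ∀ X, ∑ i : Fin 5, A (bas i) (bas i) X = 0}

lemma dot_symm (X Y : E) : dot X Y = dot Y X := by
  simp [dot, mul_comm]

lemma dot_add_left (X X' Y : E) : dot (X + X') Y = dot X Y + dot X' Y := by
  simp [dot, add_mul, Finset.sum_add_distrib]

lemma dot_smul_left (r : ℝ) (X Y : E) : dot (r • X) Y = r * dot X Y := by
  simp [dot, Finset.mul_sum, mul_assoc]

lemma dot_bas_right (X : E) (i : Fin 5) : dot X (bas i) = X i := by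
  simp [dot, bas, Pi.single_apply]

lemma dot_bas_bas (i : Fin 5) : dot (bas i) (bas i) = 1 := by
  rw [dot_bas_right]; simp [bas]

lemma sum_bas_smul (X : E) : ∑ i, X i • bas i = X := by
  have : ∀ i : Fin 5, X i • bas i = Pi.single i (X i) := by
    intro i; ext j; by_cases h : j = i <;> simp [bas, Pi.single_apply, h]
  simp only [this]
  exact Finset.univ_sum_single X

/-- 𝒯 = 𝒯₁ ⊕ 𝒯₂ ⊕ 𝒯₃. -/
theorem stmt6 :
    ∀ T ∈ TT, ∃! p : (E → E → E → ℝ) × (E → E → E → ℝ) × (E → E → E → ℝ),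
      p.1 ∈ T1 ∧ p.2.1 ∈ T2 ∧ p.2.2 ∈ T3 ∧ T = p.1 + p.2.1 + p.2.2 := by
  rintro T ⟨⟨h1, h2, h3, h4, h5, h6⟩, hsk⟩
  -- the trace functional
  set c : E → ℝ := fun X => ∑ i : Fin 5, T X (bas i) (bas i) with hc
  have cadd : ∀ a a', c (a + a') = c a + c a' := by
    intro a a'; simp [hc, h1, Finset.sum_add_distrib]
  have csmul : ∀ (r : ℝ) a, c (r • a) = r * c a := by
    intro r a; simp [hc, h2, Finset.mul_sum]
  set α : E →ₗ[ℝ] ℝ :=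
    { toFun := fun X => c X / 4
      map_add' := by intro a a'; simp [cadd]; ring
      map_smul' := by intro r a; simp [csmul]; ring } with hα
  have hαval : ∀ X, α X = c X / 4 := fun X => rfl
  -- expansion of a linear functional on the basis
  have αexp : ∀ (β : E →ₗ[ℝ] ℝ) (X : E), β X = ∑ i : Fin 5, X i * β (bas i) := by
    intro β X
    conv_lhs => rw [← sum_bas_smul X]
    rw [map_sum]
    simp [map_smul]
  -- the three components
  set P1 : E → E → E → ℝ := fun X Y Z => α X * dot Y Z - α Y * dot X Z with hP1
  set P2 : E → E → E → ℝ := fun X Y Z => (T X Y Z + T Y Z X + T Z X Y) / 3 with hP2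
  set P3 : E → E → E → ℝ := fun X Y Z => T X Y Z - P1 X Y Z - P2 X Y Z with hP3
  -- trace computations
  have traceP1 : ∀ (β : E →ₗ[ℝ] ℝ) (X : E),
      (∑ i : Fin 5, (β X * dot (bas i) (bas i) - β (bas i) * dot X (bas i))) = 4 * β X := by
    intro β X
    have : ∀ i : Fin 5, β X * dot (bas i) (bas i) - β (bas i) * dot X (bas i)
        = β X - X i * β (bas i) := by
      intro i; rw [dot_bas_bas, dot_bas_right]; ring
    simp only [this, Finset.sum_sub_distrib]
    rw [← αexp β X]
    simp [Finset.sum_const]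
    ring
  have traceP2 : ∀ X, ∑ i : Fin 5, P2 X (bas i) (bas i) = 0 := by
    intro X
    have : ∀ i : Fin 5, P2 X (bas i) (bas i) = 0 := by
      intro i
      have e1 : T (bas i) (bas i) X = 0 := by
        have := hsk (bas i) (bas i) X; linarith
      have e2 : T (bas i) X (bas i) = -T X (bas i) (bas i) := hsk X (bas i) (bas i) ▸ by
        have := hsk (bas i) X (bas i); linarith
      simp [hP2, e1, e2]
    simp [this]
  -- memberships
  have hP1T : P1 ∈ T1 := by
    refine ⟨⟨⟨?_, ?_, ?_, ?_, ?_, ?_⟩, ?_⟩, α, fun X Y Z => rfl⟩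
    · intro a a' b cc; simp [hP1, map_add, dot_add_left]; ring
    · intro r a b cc; simp [hP1, map_smul, dot_smul_left]; ring
    · intro a b b' cc
      simp [hP1, map_add, dot_add_left, dot_symm a (b + b'), dot_symm a b, dot_symm a b']
      ring
    · intro r a b cc
      simp [hP1, map_smul, dot_symm a (r • b), dot_smul_left, dot_symm a b]; ring
    · intro a b cc cc'
      simp [hP1, dot_symm b (cc + cc'), dot_symm a (cc + cc'), dot_add_left,
        dot_symm b cc, dot_symm b cc', dot_symm a cc, dot_symm a cc']
      ring
    · intro r a b cc
      simp [hP1, dot_symm b (r • cc), dot_symm a (r • cc), dot_smul_left,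
        dot_symm b cc, dot_symm a cc]
      try ring
    · intro X Y Z; simp [hP1]; try ring
  have hP2T : P2 ∈ T2 := by
    refine ⟨⟨⟨?_, ?_, ?_, ?_, ?_, ?_⟩, ?_⟩, ?_⟩
    · intro a a' b cc; simp [hP2, h1, h3, h5]; ring
    · intro r a b cc; simp [hP2, h2, h4, h6]; ring
    · intro a b b' cc; simp [hP2, h1, h3, h5]; ring
    · intro r a b cc; simp [hP2, h2, h4, h6]; ring
    · intro a b cc cc'; simp [hP2, h1, h3, h5]; ring
    · intro r a b cc; simp [hP2, h2, h4, h6]; ring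
    · intro X Y Z
      have e1 := hsk X Y Z; have e2 := hsk Z X Y; have e3 := hsk Y Z X
      simp only [hP2]; linarith
    · intro X Y Z
      have e1 := hsk X Z Y; have e2 := hsk Z Y X; have e3 := hsk Y X Z
      simp only [hP2]; linarith
  have hP3T : P3 ∈ T3 := by
    obtain ⟨⟨p11, p12, p13, p14, p15, p16⟩, p1sk⟩ := hP1T.1
    obtain ⟨⟨p21, p22, p23, p24, p25, p26⟩, p2sk⟩ := hP2T.1
    refine ⟨⟨⟨?_, ?_, ?_, ?_, ?_, ?_⟩, ?_⟩, ?_, ?_⟩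
    · intro a a' b cc; simp only [hP3, h1, p11, p21]; ring
    · intro r a b cc; simp only [hP3, h2, p12, p22]; ring
    · intro a b b' cc; simp only [hP3, h3, p13, p23]; ring
    · intro r a b cc; simp only [hP3, h4, p14, p24]; ring
    · intro a b cc cc'; simp only [hP3, h5, p15, p25]; ring
    · intro r a b cc; simp only [hP3, h6, p16, p26]; ring
    · intro X Y Z
      have e1 := hsk X Y Z; have e2 := p1sk X Y Z; have e3 := p2sk X Y Z
      simp only [hP3]; linarith
    · intro X Y Z
      have cyc1 : P1 X Y Z + P1 Y Z X + P1 Z X Y = 0 := by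
        simp [hP1, dot_symm X Y, dot_symm Y Z, dot_symm X Z]; try ring
      have cyc2 : P2 X Y Z + P2 Y Z X + P2 Z X Y
          = T X Y Z + T Y Z X + T Z X Y := by
        simp only [hP2]; ring
      simp only [hP3]; linarith
    · intro X
      have t1 : ∑ i : Fin 5, P1 X (bas i) (bas i) = 4 * α X := traceP1 α X
      have t2 := traceP2 X
      have : ∑ i : Fin 5, P3 X (bas i) (bas i)
          = (∑ i : Fin 5, T X (bas i) (bas i)) - (∑ i : Fin 5, P1 X (bas i) (bas i))
            - (∑ i : Fin 5, P2 X (bas i) (bas i)) := by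
        simp [hP3, Finset.sum_sub_distrib]
      rw [this, t1, t2, hαval]
      simp [hc]
      ring
  refine ⟨(P1, P2, P3), ⟨hP1T, hP2T, hP3T, ?_⟩, ?_⟩
  · funext X Y Z
    simp [hP3]
  · rintro ⟨q1, q2, q3⟩ ⟨⟨⟨hq1tri, hq1sk⟩, β, hβ⟩, ⟨⟨hq2tri, hq2sk⟩, hq2sk2⟩,
      ⟨⟨hq3tri, hq3sk⟩, hq3cyc, hq3tr⟩, hsum⟩
    dsimp only at hβ hq1sk hq2sk hq2sk2 hq3sk hq3cyc hq3tr hsum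
    have hsum' : ∀ X Y Z, T X Y Z = q1 X Y Z + q2 X Y Z + q3 X Y Z := by
      intro X Y Z
      have := congrFun (congrFun (congrFun hsum X) Y) Z
      simpa using this
    -- β = α
    have hβα : ∀ X, β X = α X := by
      intro X
      have tr1 : ∑ i : Fin 5, q1 X (bas i) (bas i) = 4 * β X := by
        have : ∀ i : Fin 5, q1 X (bas i) (bas i)
            = β X * dot (bas i) (bas i) - β (bas i) * dot X (bas i) := fun i => hβ X (bas i) (bas i)
        rw [Finset.sum_congr rfl (fun i _ => this i)]
        exact traceP1 β X
      have tr2 : ∑ i : Fin 5, q2 X (bas i) (bas i) = 0 := by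
        have : ∀ i : Fin 5, q2 X (bas i) (bas i) = 0 := by
          intro i; have := hq2sk2 X (bas i) (bas i); linarith
        simp [this]
      have trT : c X = ∑ i : Fin 5, q1 X (bas i) (bas i) + ∑ i : Fin 5, q2 X (bas i) (bas i)
          + ∑ i : Fin 5, q3 X (bas i) (bas i) := by
        simp only [hc, ← Finset.sum_add_distrib]
        exact Finset.sum_congr rfl fun i _ => hsum' X (bas i) (bas i)
      rw [tr1, tr2, hq3tr X] at trT
      rw [hαval]; linarith
    have hq1P1 : q1 = P1 := by
      funext X Y Z
      rw [hβ X Y Z, hβα X, hβα Y]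
    have hq2P2 : q2 = P2 := by
      funext X Y Z
      have cyc1 : q1 X Y Z + q1 Y Z X + q1 Z X Y = 0 := by
        rw [hβ X Y Z, hβ Y Z X, hβ Z X Y, dot_symm X Y, dot_symm Y Z, dot_symm X Z]; ring
      have e1 : q2 Y Z X = q2 X Y Z := by
        have a1 := hq2sk Y Z X; have a2 := hq2sk2 Z Y X; have a3 := hq2sk X Y Z
        -- q2 Y Z X = -q2 Y X Z (swap last two) = q2 X Y Z
        have b1 := hq2sk2 Y Z X  -- q2 Y Z X = -q2 Y X Z
        have b2 := hq2sk Y X Z   -- q2 Y X Z = -q2 X Y Z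
        linarith
      have e2 : q2 Z X Y = q2 X Y Z := by
        have b1 := hq2sk2 Z X Y  -- q2 Z X Y = -q2 Z Y X
        have b2 := hq2sk Z Y X   -- q2 Z Y X = -q2 Y Z X
        linarith [e1]
      have cyc3 := hq3cyc X Y Z
      have s1 := hsum' X Y Z; have s2 := hsum' Y Z X; have s3 := hsum' Z X Y
      simp only [hP2]; linarith
    have hq3P3 : q3 = P3 := by
      funext X Y Z
      have := hsum' X Y Z
      rw [hq1P1, hq2P2] at this
      simp only [hP3]; linarith
    ext1
    · exact hq1P1
    refine Prod.ext hq2P2 hq3P3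
end
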